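/- For a colour s of a Set-valued symmetric coloured operad S, the corepresentable algebra s̲(-), defined on a colour c by the disjoint union over n ≥ 0 of the quotients S(s,...,s;c)/Σ_n (with n copies of s), satisfies the operadic Yoneda lemma: for any S-algebra F in Sets, the set of natural transformations from s̲(-) to F is in bijection with F(s), the bijection being given by evaluation at id_s. -/

import Mathlib

universe u

/-- A symmetric coloured operad in `Set` (presented with a list-indexed set of
operations, full operadic composition, units and symmetric group actions). -/
structure Operad : Type (u + 1) where
  /-- The colours of the operad. -/
  Color : Type u
  /-- The set of operations with a given (ordered) list of input colours and output colour. -/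
  Op : List Color → Color → Type u
  /-- The identity (unit) operation at each colour. -/
  unit : ∀ c : Color, Op [c] c
  /-- Full operadic composition: an operation may be composed with a list of operations
  whose outputs match its inputs. -/
  comp : ∀ {cs : List Color} {c : Color}, Op cs c →
    ∀ gs : List (Σ ds : List Color, Σ x : Color, Op ds x),
      gs.map (fun g => g.2.1) = cs → Op (gs.map (fun g => g.1)).flatten c
  /-- The symmetric group actions, permuting the inputs of an operation. -/
  perm : ∀ {cs : List Color} {c : Color} (σ : Equiv.Perm (Fin cs.length)),
    Op cs c → Op (List.ofFn (fun i => cs.get (σ i))) c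
  /-- Right unit law. -/
  comp_unit : ∀ {cs : List Color} {c : Color} (f : Op cs c)
      (h : (cs.map fun d => (⟨[d], d, unit d⟩ : Σ ds : List Color, Σ x : Color, Op ds x)).map
        (fun g => g.2.1) = cs),
    HEq (comp f _ h) f
  /-- Left unit law. -/
  unit_comp : ∀ {ds : List Color} {x : Color} (g : Op ds x)
      (h : [(⟨ds, x, g⟩ : Σ ds : List Color, Σ x : Color, Op ds x)].map (fun g => g.2.1) = [x]),
    HEq (comp (unit x) _ h) g
  /-- The identity permutation acts trivially. -/
  perm_refl : ∀ {cs : List Color} {c : Color} (f : Op cs c), HEq (perm (Equiv.refl _) f) f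
  /-- Associativity of operadic composition. -/
  assoc : ∀ {cs : List Color} {c : Color} (f : Op cs c)
      (gs : List (Σ ds : List Color, Σ x : Color, Op ds x))
      (hg : gs.map (fun g => g.2.1) = cs)
      (hss : List (List (Σ ds : List Color, Σ x : Color, Op ds x)))
      (hlen : hss.length = gs.length)
      (hmatch : ∀ (i : ℕ) (hi : i < gs.length) (hi' : i < hss.length),
        (hss[i]).map (fun g => g.2.1) = (gs[i]).1)
      (hflat : hss.flatten.map (fun g => g.2.1) = (gs.map (fun g => g.1)).flatten)
      (gs' : List (Σ ds : List Color, Σ x : Color, Op ds x))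
      (hlen' : gs'.length = gs.length)
      (hrel : ∀ (i : ℕ) (hi : i < gs.length) (hi' : i < hss.length) (hi'' : i < gs'.length),
        gs'[i] = ⟨((hss[i]).map (fun g => g.1)).flatten, (gs[i]).2.1,
          comp (gs[i]).2.2 (hss[i]) (hmatch i hi hi')⟩)
      (h2 : gs'.map (fun g => g.2.1) = cs),
    HEq (comp (comp f gs hg) hss.flatten hflat) (comp f gs' h2)

/-- A morphism of symmetric coloured operads. -/
structure OperadHom (X S : Operad.{u}) : Type u where
  /-- The underlying map on colours. -/
  onColor : X.Color → S.Color
  /-- The underlying map on operations. -/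
  onOp : ∀ {cs : List X.Color} {c : X.Color}, X.Op cs c → S.Op (cs.map onColor) (onColor c)
  /-- Compatibility with units. -/
  onOp_unit : ∀ c, onOp (X.unit c) = S.unit (onColor c)
  /-- Compatibility with operadic composition. -/
  onOp_comp : ∀ {cs : List X.Color} {c : X.Color} (f : X.Op cs c)
      (gs : List (Σ ds : List X.Color, Σ x : X.Color, X.Op ds x))
      (hg : gs.map (fun g => g.2.1) = cs)
      (hg' : (gs.map (fun g =>
          (⟨g.1.map onColor, onColor g.2.1, onOp g.2.2⟩ : Σ ds : List S.Color, Σ x : S.Color, S.Op ds x))).map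
          (fun g => g.2.1) = cs.map onColor),
    HEq (onOp (X.comp f gs hg)) (S.comp (onOp f) _ hg')
  /-- Compatibility with the symmetric group actions. -/
  onOp_perm : ∀ {cs : List X.Color} {c : X.Color} (σ : Equiv.Perm (Fin cs.length)) (f : X.Op cs c)
      (σ' : Equiv.Perm (Fin (cs.map onColor).length))
      (hσ : ∀ (i : ℕ) (h : i < cs.length) (h' : i < (cs.map onColor).length),
        (σ' ⟨i, h'⟩ : ℕ) = (σ ⟨i, h⟩ : ℕ)),
    HEq (onOp (X.perm σ f)) (S.perm σ' (onOp f))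

theorem List.flatten_map_singleton' {α : Type u} (l : List α) :
    (l.map fun a => [a]).flatten = l := by
  induction l with
  | nil => rfl
  | cons a t ih => simpa using ih

/-- Partial ("∘ᵢ") composition: plug an operation `ξ : (x₁,…,xₙ) → x` into the
input of colour `x` sitting between the inputs `as` and `bs` of `τ`. -/
def Operad.precomp (X : Operad.{u}) {as bs xs : List X.Color} {x z : X.Color}
    (τ : X.Op (as ++ x :: bs) z) (ξ : X.Op xs x) : X.Op (as ++ xs ++ bs) z :=
  cast (congrArg (fun l => X.Op l z) (by
    simp [List.flatten_map_singleton', Function.comp_def]))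
    (X.comp τ ((as.map fun d => ⟨[d], d, X.unit d⟩) ++
        ⟨xs, x, ξ⟩ :: (bs.map fun d => ⟨[d], d, X.unit d⟩))
      (by simp [Function.comp_def]))

/-- An operation `ξ` of `X` is `p`-coCartesian if every operation of `X` whose inputs
contain the inputs of `ξ` (in any position), together with a factorization of its image
through `p(ξ)` in `S`, factors uniquely through `ξ` compatibly with the given
factorization. -/
def OperadHom.IsCoCartesian {X S : Operad.{u}} (p : OperadHom X S) {xs : List X.Color}
    {x : X.Color} (ξ : X.Op xs x) : Prop :=
  ∀ (as bs : List X.Color) (z : X.Color) (χ : X.Op (as ++ xs ++ bs) z)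
    (σ : S.Op (as.map p.onColor ++ p.onColor x :: bs.map p.onColor) (p.onColor z)),
    HEq (p.onOp χ) (S.precomp σ (p.onOp ξ)) →
    ∃! ζ : X.Op (as ++ x :: bs) z,
      HEq (p.onOp ζ) σ ∧ X.precomp ζ ξ = χ

/-- `p : X ⟶ S` exhibits `X` as opfibered over `S` if every operation of `S` with
prescribed lifts of its inputs admits a `p`-coCartesian lift with those inputs. -/
def OperadHom.IsOpfibered {X S : Operad.{u}} (p : OperadHom X S) : Prop :=
  ∀ {ss : List S.Color} {s : S.Color} (σ : S.Op ss s) (xs : List X.Color),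
    xs.map p.onColor = ss →
    ∃ (x : X.Color) (ξ : X.Op xs x),
      p.onColor x = s ∧ HEq (p.onOp ξ) σ ∧ p.IsCoCartesian ξ

/-- A unary operation of an operad is an isomorphism if it admits a two-sided
inverse unary operation. -/
def Operad.IsIso (X : Operad.{u}) {x y : X.Color} (ξ : X.Op [x] y) : Prop :=
  ∃ inv : X.Op [y] x,
    X.precomp (as := []) (bs := []) ξ inv = X.unit y ∧
    X.precomp (as := []) (bs := []) inv ξ = X.unit x

/-- An algebra over a `Set`-valued operad `S` with values in `Sets`, i.e. a morphism of
operads `S → Sets̲`.  The action is presented on lists of elements of the total space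
lying over the input colours. -/
structure OperadAlgebra (S : Operad.{u}) : Type (u + 1) where
  /-- The underlying family of sets. -/
  carrier : S.Color → Type u
  /-- The action of operations. -/
  act : ∀ {cs : List S.Color} {c : S.Color}, S.Op cs c →
    ∀ xs : List (Σ c : S.Color, carrier c), xs.map Sigma.fst = cs → carrier c
  /-- Units act trivially. -/
  act_unit : ∀ (c : S.Color) (a : carrier c)
      (h : [(⟨c, a⟩ : Σ c : S.Color, carrier c)].map Sigma.fst = [c]),
    act (S.unit c) [⟨c, a⟩] h = a
  /-- The action is compatible with operadic composition. -/
  act_comp : ∀ {cs : List S.Color} {c : S.Color} (f : S.Op cs c)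
      (gs : List (Σ ds : List S.Color, Σ x : S.Color, S.Op ds x))
      (hg : gs.map (fun g => g.2.1) = cs)
      (xss : List (List (Σ c : S.Color, carrier c))) (hlen : xss.length = gs.length)
      (hmatch : ∀ (i : ℕ) (hi : i < gs.length) (hi' : i < xss.length),
        (xss[i]).map Sigma.fst = (gs[i]).1)
      (hflat : xss.flatten.map Sigma.fst = (gs.map (fun g => g.1)).flatten)
      (ys : List (Σ c : S.Color, carrier c)) (hylen : ys.length = gs.length)
      (hy : ∀ (i : ℕ) (hi : i < gs.length) (hi' : i < xss.length) (hi'' : i < ys.length),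
        ys[i] = ⟨(gs[i]).2.1, act (gs[i]).2.2 (xss[i]) (hmatch i hi hi')⟩)
      (hys : ys.map Sigma.fst = cs),
    act (S.comp f gs hg) xss.flatten hflat = act f ys hys
  /-- The action is compatible with the symmetric group actions. -/
  act_perm : ∀ {cs : List S.Color} {c : S.Color} (σ : Equiv.Perm (Fin cs.length))
      (f : S.Op cs c) (xs ys : List (Σ c : S.Color, carrier c))
      (hx : xs.map Sigma.fst = List.ofFn (fun i => cs.get (σ i)))
      (hy : ys.map Sigma.fst = cs)
      (hxy : ∀ i : Fin cs.length, xs[(i : ℕ)]? = ys[((σ i : Fin cs.length) : ℕ)]?),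
    act (S.perm σ f) xs hx = act f ys hy

/-- A natural transformation (morphism) of `S`-algebras in `Sets`. -/
structure OperadAlgHom {S : Operad.{u}} (F G : OperadAlgebra S) : Type u where
  /-- The components of the transformation. -/
  app : ∀ c, F.carrier c → G.carrier c
  /-- Naturality with respect to the action of operations. -/
  naturality : ∀ {cs : List S.Color} {c : S.Color} (f : S.Op cs c)
      (xs : List (Σ c : S.Color, F.carrier c)) (h : xs.map Sigma.fst = cs)
      (h' : (xs.map fun q => (⟨q.1, app q.1 q.2⟩ : Σ c : S.Color, G.carrier c)).map
        Sigma.fst = cs),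
    app c (F.act f xs h) = G.act f _ h'

section Helpers

variable {S : Operad.{u}}

theorem OperadAlgHom.ext' {F G : OperadAlgebra S} {η η' : OperadAlgHom F G}
    (h : η.app = η'.app) : η = η' := by
  cases η; cases η'; cases h; rfl

theorem OperadAlgebra.act_congr (F : OperadAlgebra S) {cs cs' : List S.Color} {c : S.Color}
    (f : S.Op cs c) (f' : S.Op cs' c) (hf : HEq f f')
    (xs xs' : List (Σ c : S.Color, F.carrier c)) (hxs : xs = xs')
    (h : xs.map Sigma.fst = cs) (h' : xs'.map Sigma.fst = cs') :
    F.act f xs h = F.act f' xs' h' := by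
  subst hxs
  have hcs : cs = cs' := h.symm.trans h'
  subst hcs
  cases hf
  rfl

theorem flatten_map_replicate {α : Type u} (l : List ℕ) (x : α) :
    (l.map fun k => List.replicate k x).flatten = List.replicate l.sum x := by
  induction l with
  | nil => rfl
  | cons k t ih => simp only [List.map_cons, List.flatten_cons, ih, List.sum_cons,
      List.replicate_add]

/-- Well-definedness: acting with two representatives of the same `Σₙ`-orbit on
constant lists of copies of a fixed element gives the same result. -/
theorem OperadAlgebra.act_welldef (F : OperadAlgebra S) {s : S.Color} (a : F.carrier s)
    {c : S.Color} {n m : ℕ} (e : S.Op (List.replicate n s) c) (e' : S.Op (List.replicate m s) c)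
    (hn : n = m) (σ : Equiv.Perm (Fin (List.replicate n s).length))
    (hσ : HEq (S.perm σ e) e')
    (h : (List.replicate n (⟨s, a⟩ : Σ c : S.Color, F.carrier c)).map Sigma.fst
        = List.replicate n s)
    (h' : (List.replicate m (⟨s, a⟩ : Σ c : S.Color, F.carrier c)).map Sigma.fst
        = List.replicate m s) :
    F.act e (List.replicate n ⟨s, a⟩) h = F.act e' (List.replicate m ⟨s, a⟩) h' := by
  subst hn
  have hx : (List.replicate n (⟨s, a⟩ : Σ c : S.Color, F.carrier c)).map Sigma.fst
      = List.ofFn (fun i => (List.replicate n s).get (σ i)) := by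
    simp [List.getElem_replicate]
  have hperm := F.act_perm σ e (List.replicate n ⟨s, a⟩) (List.replicate n ⟨s, a⟩) hx h'
    (by
      intro i
      have h1 : (i : ℕ) < n := by simpa using i.isLt
      have h2 : ((σ i : Fin (List.replicate n s).length) : ℕ) < n := by
        simpa using (σ i).isLt
      simp [List.getElem?_replicate, h1, h2])
  exact hperm.symm.trans (F.act_congr (S.perm σ e) e' hσ _ _ rfl hx h')


theorem Operad.comp_congr (S : Operad.{u}) {cs : List S.Color} {c : S.Color} (f : S.Op cs c)
    (gs gs' : List (Σ ds : List S.Color, Σ x : S.Color, S.Op ds x)) (hgs : gs = gs')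
    (hg : gs.map (fun g => g.2.1) = cs) (hg' : gs'.map (fun g => g.2.1) = cs) :
    HEq (S.comp f gs hg) (S.comp f gs' hg') := by
  subst hgs; rfl


theorem OperadAlgebra.mk_act_congr (F : OperadAlgebra S)
    (A A' : Σ ds : List S.Color, Σ x : S.Color, S.Op ds x) (hAA : A = A')
    (ls ls' : List (Σ c : S.Color, F.carrier c)) (hls : ls = ls')
    (hA : ls.map Sigma.fst = A.1) (hA' : ls'.map Sigma.fst = A'.1) :
    (⟨A.2.1, F.act A.2.2 ls hA⟩ : Σ c : S.Color, F.carrier c)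
      = ⟨A'.2.1, F.act A'.2.2 ls' hA'⟩ := by
  subst hAA; subst hls; rfl

end Helpers

/-- **operadic Yoneda lemma.** Let `s` be a colour of a `Set`-valued
operad `S` and let `Rep` be (any realization of) the corepresentable algebra
`s̲(-) : c ↦ ⨿_{n ≥ 0} S(s,…,s; c)/Σₙ`: this is encoded by surjections
`q c : (Σ n, S.Op (replicate n s) c) → Rep.carrier c` whose fibres are exactly the
`Σₙ`-orbits, compatibly with the algebra structure.  Then for every `S`-algebra `F`
in `Sets`, evaluation at (the class of) `id_s` is a bijection from the set of
natural transformations `s̲(-) → F` to `F(s)`. -/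
theorem statement0 (S : Operad.{u}) (s : S.Color) (F : OperadAlgebra S)
    (Rep : OperadAlgebra S)
    (q : ∀ c, (Σ n : ℕ, S.Op (List.replicate n s) c) → Rep.carrier c)
    (hsurj : ∀ c, Function.Surjective (q c))
    (hker : ∀ c (a b : Σ n : ℕ, S.Op (List.replicate n s) c), q c a = q c b ↔
      ∃ (_ : a.1 = b.1) (σ : Equiv.Perm (Fin (List.replicate a.1 s).length)),
        HEq (S.perm σ a.2) b.2)
    (hact : ∀ {cs : List S.Color} {c : S.Color} (f : S.Op cs c)
      (gs : List (Σ d : S.Color, Σ n : ℕ, S.Op (List.replicate n s) d))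
      (hg : gs.map Sigma.fst = cs)
      (hg' : (gs.map fun g => (⟨List.replicate g.2.1 s, g.1, g.2.2⟩ :
          Σ ds : List S.Color, Σ x : S.Color, S.Op ds x)).map (fun g => g.2.1) = cs)
      (N : ℕ) (hN : N = (gs.map fun g => g.2.1).sum)
      (e : S.Op (List.replicate N s) c)
      (he : HEq e (S.comp f (gs.map fun g => ⟨List.replicate g.2.1 s, g.1, g.2.2⟩) hg'))
      (h : (gs.map fun g => (⟨g.1, q g.1 ⟨g.2.1, g.2.2⟩⟩ :
          Σ c : S.Color, Rep.carrier c)).map Sigma.fst = cs),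
      Rep.act f _ h = q c ⟨N, e⟩) :
    Function.Bijective (fun η : OperadAlgHom Rep F => η.app s (q s ⟨1, S.unit s⟩)) := by
  classical
  -- Helper: `q c ⟨n, e⟩` is the action of `e` on `n` copies of the point `q s ⟨1, unit s⟩`.
  have rep_eq : ∀ (c : S.Color) (n : ℕ) (e : S.Op (List.replicate n s) c)
      (h : (List.replicate n (⟨s, q s ⟨1, S.unit s⟩⟩ : Σ c, Rep.carrier c)).map Sigma.fst
        = List.replicate n s),
      Rep.act e (List.replicate n ⟨s, q s ⟨1, S.unit s⟩⟩) h = q c ⟨n, e⟩ := by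
    intro c n e h
    have hL : (List.replicate n (⟨s, 1, S.unit s⟩ :
          Σ d : S.Color, Σ k : ℕ, S.Op (List.replicate k s) d)).map
          (fun g => (⟨List.replicate g.2.1 s, g.1, g.2.2⟩ :
            Σ ds : List S.Color, Σ x : S.Color, S.Op ds x))
        = (List.replicate n s).map fun d =>
            (⟨[d], d, S.unit d⟩ : Σ ds : List S.Color, Σ x : S.Color, S.Op ds x) := by
      simp [List.map_replicate]
    have he : HEq e (S.comp e ((List.replicate n (⟨s, 1, S.unit s⟩ :
        Σ d : S.Color, Σ k : ℕ, S.Op (List.replicate k s) d)).map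
          fun g => ⟨List.replicate g.2.1 s, g.1, g.2.2⟩) (by simp)) := by
      exact (S.comp_unit e (by simp)).symm.trans (S.comp_congr e _ _ hL.symm _ _)
    have h1 := hact e (List.replicate n ⟨s, 1, S.unit s⟩) (by simp) (by simp) n (by simp) e he
      (by simp)
    refine (Rep.act_congr e e HEq.rfl _ _ ?_ h _).trans h1
    simp [List.map_replicate]
  constructor
  · -- injectivity
    intro η η' hval
    simp only at hval
    apply OperadAlgHom.ext'
    funext c r
    obtain ⟨⟨n, e⟩, hq⟩ := hsurj c r
    have hrep : (List.replicate n (⟨s, q s ⟨1, S.unit s⟩⟩ : Σ c, Rep.carrier c)).map Sigma.fst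
        = List.replicate n s := by simp
    have hr : r = Rep.act e (List.replicate n ⟨s, q s ⟨1, S.unit s⟩⟩) hrep := by
      rw [rep_eq, hq]
    rw [hr, η.naturality e _ hrep (by simp), η'.naturality e _ hrep (by simp)]
    exact F.act_congr e e HEq.rfl _ _ (by simp [List.map_replicate, hval]) _ _
  · -- surjectivity
    intro a
    have hmapfst : ∀ k : ℕ,
        (List.replicate k (⟨s, a⟩ : Σ c, F.carrier c)).map Sigma.fst = List.replicate k s := by
      simp
    let app : ∀ c, Rep.carrier c → F.carrier c := fun c r =>
      F.act (hsurj c r).choose.2 (List.replicate (hsurj c r).choose.1 ⟨s, a⟩) (hmapfst _)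
    have appq : ∀ (c : S.Color) (n : ℕ) (e : S.Op (List.replicate n s) c),
        app c (q c ⟨n, e⟩) = F.act e (List.replicate n ⟨s, a⟩) (hmapfst _) := by
      intro c n e
      obtain ⟨hn, σ, hσ⟩ := (hker c _ _).mp ((hsurj c (q c ⟨n, e⟩)).choose_spec)
      exact F.act_welldef a _ e hn σ hσ _ _
    refine ⟨⟨app, ?_⟩, ?_⟩
    · -- naturality
      intro cs c f xs h h'
      let gs : List (Σ d : S.Color, Σ n : ℕ, S.Op (List.replicate n s) d) :=
        xs.map fun p => ⟨p.1, (hsurj p.1 p.2).choose⟩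
      have hg : gs.map Sigma.fst = cs := by
        simpa [gs, List.map_map, Function.comp_def] using h
      have hg' : (gs.map fun g => (⟨List.replicate g.2.1 s, g.1, g.2.2⟩ :
          Σ ds : List S.Color, Σ x : S.Color, S.Op ds x)).map (fun g => g.2.1) = cs := by
        simpa [gs, List.map_map, Function.comp_def] using h
      set N := (gs.map fun g => g.2.1).sum with hN
      have hflatrep : ((gs.map fun g => (⟨List.replicate g.2.1 s, g.1, g.2.2⟩ :
          Σ ds : List S.Color, Σ x : S.Color, S.Op ds x)).map (fun g => g.1)).flatten
          = List.replicate N s := by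
        rw [List.map_map]
        have hcm : ((fun (g : Σ ds : List S.Color, Σ x : S.Color, S.Op ds x) => g.1) ∘
            (fun (g : Σ d : S.Color, Σ n : ℕ, S.Op (List.replicate n s) d) =>
              (⟨List.replicate g.2.1 s, g.1, g.2.2⟩ :
                Σ ds : List S.Color, Σ x : S.Color, S.Op ds x)))
            = (fun k => List.replicate k s) ∘ (fun g => g.2.1) := rfl
        rw [hcm, ← List.map_map, flatten_map_replicate]
      set E := S.comp f (gs.map fun g => ⟨List.replicate g.2.1 s, g.1, g.2.2⟩) hg' with hE
      let e : S.Op (List.replicate N s) c := cast (congrArg (fun l => S.Op l c) hflatrep) E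
      have he : HEq e E := cast_heq _ _
      have h1 := hact f gs hg hg' N hN e he (by simpa [gs, List.map_map, Function.comp_def] using h)
      have hlist : gs.map (fun g => (⟨g.1, q g.1 ⟨g.2.1, g.2.2⟩⟩ :
          Σ c : S.Color, Rep.carrier c)) = xs := by
        simp only [gs, List.map_map]
        conv_rhs => rw [← List.map_id xs]
        refine List.map_congr_left ?_
        intro p _
        obtain ⟨d, r⟩ := p
        simp [Function.comp_def, (hsurj d r).choose_spec]
      have h2 : Rep.act f xs h = q c ⟨N, e⟩ :=
        (Rep.act_congr f f HEq.rfl xs _ hlist.symm h _).trans h1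
      rw [h2, appq c N e]
      -- now decompose the action of `e` via `act_comp`
      let xss : List (List (Σ c : S.Color, F.carrier c)) :=
        gs.map fun g => List.replicate g.2.1 ⟨s, a⟩
      have hxssflat : xss.flatten = List.replicate N ⟨s, a⟩ := by
        have hcm : xss = ((gs.map fun g => g.2.1).map fun k => List.replicate k ⟨s, a⟩) := by
          simp [xss, List.map_map]
        rw [hcm, flatten_map_replicate]
      have hmatch : ∀ (i : ℕ) (hi : i < (gs.map fun g => (⟨List.replicate g.2.1 s, g.1, g.2.2⟩ :
          Σ ds : List S.Color, Σ x : S.Color, S.Op ds x)).length) (hi' : i < xss.length),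
          (xss[i]).map Sigma.fst = ((gs.map fun g => (⟨List.replicate g.2.1 s, g.1, g.2.2⟩ :
            Σ ds : List S.Color, Σ x : S.Color, S.Op ds x))[i]).1 := by
        intro i hi hi'
        simp [xss, List.getElem_map]
      have hflat2 : xss.flatten.map Sigma.fst = ((gs.map fun g =>
          (⟨List.replicate g.2.1 s, g.1, g.2.2⟩ :
            Σ ds : List S.Color, Σ x : S.Color, S.Op ds x)).map (fun g => g.1)).flatten := by
        rw [hxssflat, hflatrep]; simp
      have hcomp := F.act_comp f (gs.map fun g => ⟨List.replicate g.2.1 s, g.1, g.2.2⟩) hg'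
        xss (by simp [xss]) hmatch hflat2
        (xs.map fun p => ⟨p.1, app p.1 p.2⟩) (by simp [gs]) ?_ h'
      · exact (F.act_congr e E he _ _ hxssflat.symm (hmapfst N) hflat2).trans hcomp
      · intro i hi hi' hi''
        have hx : i < xs.length := by simpa [xss, gs] using hi'
        have eA : (gs.map fun g => (⟨List.replicate g.2.1 s, g.1, g.2.2⟩ :
              Σ ds : List S.Color, Σ x : S.Color, S.Op ds x))[i]'hi
            = ⟨List.replicate (hsurj (xs[i]'hx).1 (xs[i]'hx).2).choose.1 s, (xs[i]'hx).1,
                (hsurj (xs[i]'hx).1 (xs[i]'hx).2).choose.2⟩ := by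
          simp [gs, List.map_map]
        have eX : xss[i]'hi'
            = List.replicate (hsurj (xs[i]'hx).1 (xs[i]'hx).2).choose.1 ⟨s, a⟩ := by
          simp [xss, gs, List.map_map]
        have eY : (xs.map fun p => (⟨p.1, app p.1 p.2⟩ : Σ c, F.carrier c))[i]'hi''
            = ⟨(xs[i]'hx).1, app (xs[i]'hx).1 (xs[i]'hx).2⟩ := by
          simp
        rw [eY]
        exact Eq.trans rfl
          (F.mk_act_congr _ _ eA _ _ eX (hmatch i hi hi') (hmapfst _)).symm
    · -- evaluation at the unit
      show app s (q s ⟨1, S.unit s⟩) = a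
      rw [appq s 1 (S.unit s)]
      exact F.act_unit s a _
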